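/- arXiv:2509.20794 — 2 statements merged into one kernel-verified Lean document; each statement's English description precedes it below -/
import Mathlib

section
/- Let C be a linear code of length n over a finite commutative Frobenius ring R, and let F = (F_0, F_1, …, F_t) be a tuple of non-empty subsets of {0, 1, …, t}. Let P^F be the (t+1)×(t+1) matrix with (i,j) entry equal to 1 if j ∈ F_i and 0 otherwise. Then, as an identity of polynomials in y_0, …, y_t, swe_C(P^F y) = Σ_{X ⊆ t·[n]} B^F_C(X) · y_0^{|M_0(X)|} y_1^{|M_1(X)|} ⋯ y_t^{|M_t(X)|}, where the sum runs over all submultisets X of t·[n]. -/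
noncomputable section
open scoped BigOperators

/-- The dual of a linear code `C ⊆ Rⁿ` with respect to the standard inner
product `u·v = ∑ ℓ, u ℓ * v ℓ`. -/
def dualCode {R : Type*} [CommRing R] {n : ℕ} (C : Submodule R (Fin n → R)) :
    Submodule R (Fin n → R) where
  carrier := {v | ∀ u ∈ C, ∑ ℓ, u ℓ * v ℓ = 0}
  add_mem' := by
    intro v w hv hw u hu
    simp only [Set.mem_setOf_eq] at *
    have h1 := hv u hu
    have h2 := hw u hu
    simp only [Pi.add_apply, mul_add, Finset.sum_add_distrib, h1, h2, add_zero]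
  zero_mem' := by
    intro u hu
    simp
  smul_mem' := by
    intro c v hv u hu
    simp only [Set.mem_setOf_eq] at *
    have h := hv u hu
    have : ∑ ℓ, u ℓ * (c • v) ℓ = c * ∑ ℓ, u ℓ * v ℓ := by
      rw [Finset.mul_sum]
      exact Finset.sum_congr rfl fun ℓ _ => by
        simp only [Pi.smul_apply, smul_eq_mul]; ring
    rw [this, h, mul_zero]

/-- A finite commutative ring is Frobenius iff `|C|·|C⊥| = |R|ⁿ` for every
linear code `C` of every length `n` over `R`. -/
def IsFrobeniusRing (R : Type*) [CommRing R] [Fintype R] : Prop :=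
  ∀ (n : ℕ) (C : Submodule R (Fin n → R)),
    Nat.card C * Nat.card (dualCode C) = Fintype.card R ^ n

open MvPolynomial Classical

/-- The symmetrized weight composition `swc_i(c) = |{ℓ : c_ℓ R = a_i R}|`. -/
def swc {R : Type*} [CommRing R] {t n : ℕ} (a : Fin (t + 1) → R)
    (c : Fin n → R) (i : Fin (t + 1)) : ℕ :=
  Nat.card {ℓ : Fin n // Ideal.span {c ℓ} = Ideal.span {a i}}

/-- The symmetrized weight enumerator
`swe_C(x₀, …, x_t) = ∑_{c ∈ C} ∏ᵢ xᵢ^(swcᵢ(c))`. -/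
def swe {R : Type*} [CommRing R] [Fintype R] {t n : ℕ} (a : Fin (t + 1) → R)
    (C : Submodule R (Fin n → R)) : MvPolynomial (Fin (t + 1)) ℚ :=
  haveI : Fintype C := Fintype.ofFinite C
  ∑ c : C, ∏ i, X i ^ swc a (c : Fin n → R) i

/-- For a tuple `F = (F₀, …, F_t)` of subsets of `{0, …, t}` and a submultiset
`X ⊆ t·[n]` (identified with its multiplicity function `m : [n] → {0, …, t}`),
`B^F_C(X) = |{c ∈ C : S_i(c) ⊆ ∪_{j ∈ F_i} M_j(X) for all i}|`. -/
def BF {R : Type*} [CommRing R] {t n : ℕ} (a : Fin (t + 1) → R)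
    (C : Submodule R (Fin n → R)) (F : Fin (t + 1) → Set (Fin (t + 1)))
    (m : Fin n → Fin (t + 1)) : ℕ :=
  Nat.card {c : C // ∀ (i : Fin (t + 1)) (ℓ : Fin n),
    Ideal.span {(c : Fin n → R) ℓ} = Ideal.span {a i} → m ℓ ∈ F i}

/-- Auxiliary: a product over fibers. -/
lemma prod_fiber_pow {M : Type*} [CommMonoid M] {n k : ℕ} (f : Fin n → Fin k) (g : Fin k → M) :
    (∏ i, g i ^ (Finset.univ.filter (fun ℓ => f ℓ = i)).card) = ∏ ℓ, g (f ℓ) := by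
  classical
  rw [← Finset.prod_fiberwise' Finset.univ f g]
  exact Finset.prod_congr rfl fun i _ => (Finset.prod_const (g i)).symm

/-- Auxiliary: product of indicator values. -/
lemma prod_ite_all {α : Type*} [Fintype α] {β : Type*} [CommSemiring β] (p : α → Prop)
    [DecidablePred p] :
    (∏ x : α, if p x then (1 : β) else 0) = if ∀ x, p x then 1 else 0 := by
  classical
  by_cases h : ∀ x, p x
  · rw [if_pos h]
    exact Finset.prod_eq_one fun x _ => if_pos (h x)
  · rw [if_neg h]
    push_neg at h
    obtain ⟨x, hx⟩ := h
    exact Finset.prod_eq_zero (Finset.mem_univ x) (if_neg hx)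

/-- for any tuple `F` of non-empty subsets of `{0, …, t}`,
`swe_C(P^F y) = ∑_{X ⊆ t·[n]} B^F_C(X) ∏ᵢ yᵢ^{|M_i(X)|}`. -/
theorem stmt5 {R : Type*} [CommRing R] [Fintype R] (hR : IsFrobeniusRing R)
    {t : ℕ} (a : Fin (t + 1) → R)
    (hrep : ∀ r : R, ∃ i, Ideal.span {r} = Ideal.span {a i})
    (hinj : ∀ i j, Ideal.span {a i} = Ideal.span {a j} → i = j)
    {n : ℕ} (C : Submodule R (Fin n → R))
    (F : Fin (t + 1) → Set (Fin (t + 1))) (hF : ∀ i, (F i).Nonempty)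
    (P : Matrix (Fin (t + 1)) (Fin (t + 1)) ℚ)
    (hP : ∀ i j, P i j = if j ∈ F i then 1 else 0) :
    (MvPolynomial.bind₁ (fun i : Fin (t + 1) =>
        ∑ j : Fin (t + 1), MvPolynomial.C (P i j) * X j)) (swe a C) =
      ∑ m : Fin n → Fin (t + 1),
        MvPolynomial.C ((BF a C F m : ℚ)) *
          ∏ i : Fin (t + 1), X i ^ (Nat.card {ℓ : Fin n // m ℓ = i}) := by
  classical
  haveI : Fintype C := Fintype.ofFinite C
  -- key computation for a single codeword
  have key : ∀ c : C,
      (MvPolynomial.bind₁ (fun i : Fin (t + 1) =>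
          ∑ j : Fin (t + 1), MvPolynomial.C (P i j) * X j))
        (∏ i, X i ^ swc a (c : Fin n → R) i)
      = ∑ m : Fin n → Fin (t + 1),
          (if (∀ (i : Fin (t + 1)) (ℓ : Fin n),
              Ideal.span {(c : Fin n → R) ℓ} = Ideal.span {a i} → m ℓ ∈ F i)
            then (1 : MvPolynomial (Fin (t + 1)) ℚ) else 0) * ∏ ℓ, X (m ℓ) := by
    intro c
    set f : Fin n → Fin (t + 1) := fun ℓ => (hrep ((c : Fin n → R) ℓ)).choose with hf
    have hspec : ∀ ℓ, Ideal.span {(c : Fin n → R) ℓ} = Ideal.span {a (f ℓ)} :=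
      fun ℓ => (hrep ((c : Fin n → R) ℓ)).choose_spec
    have hsw : ∀ i, swc a (c : Fin n → R) i
        = (Finset.univ.filter (fun ℓ => f ℓ = i)).card := by
      intro i
      rw [swc, Nat.card_eq_fintype_card, Fintype.card_subtype]
      congr 1
      apply Finset.filter_congr
      intro ℓ _
      constructor
      · intro h
        exact hinj _ _ ((hspec ℓ).symm.trans h)
      · rintro rfl
        exact hspec ℓ
    rw [map_prod]
    simp only [map_pow, MvPolynomial.bind₁_X_right]
    calc (∏ i, (∑ j : Fin (t + 1), MvPolynomial.C (P i j) * X j) ^ swc a (c : Fin n → R) i)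
        = ∏ i, (∑ j : Fin (t + 1), MvPolynomial.C (P i j) * X j)
            ^ (Finset.univ.filter (fun ℓ => f ℓ = i)).card :=
          Finset.prod_congr rfl fun i _ => by rw [hsw i]
      _ = ∏ ℓ, ∑ j : Fin (t + 1), MvPolynomial.C (P (f ℓ) j) * X j :=
          prod_fiber_pow f _
      _ = ∑ m : Fin n → Fin (t + 1), ∏ ℓ, MvPolynomial.C (P (f ℓ) (m ℓ)) * X (m ℓ) :=
          Fintype.prod_sum _
      _ = _ := by
          refine Finset.sum_congr rfl fun m _ => ?_
          rw [Finset.prod_mul_distrib]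
          congr 1
          rw [← map_prod]
          have : (∏ ℓ, P (f ℓ) (m ℓ)) = if ∀ ℓ, m ℓ ∈ F (f ℓ) then (1 : ℚ) else 0 := by
            simp only [hP]
            convert prod_ite_all (β := ℚ) (fun ℓ => m ℓ ∈ F (f ℓ)) using 2
          rw [this, apply_ite MvPolynomial.C, map_one, map_zero]
          congr 1
          apply propext
          constructor
          · intro h i ℓ hspan
            have hfi : f ℓ = i := hinj _ _ ((hspec ℓ).symm.trans hspan)
            exact hfi ▸ h ℓ
          · intro h ℓ
            exact h (f ℓ) ℓ (hspec ℓ)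
  unfold swe
  rw [map_sum]
  refine Eq.trans (Finset.sum_congr rfl fun c _ => key c) ?_
  refine Eq.trans Finset.sum_comm ?_
  refine Finset.sum_congr rfl fun m _ => ?_
  · 
    rw [← Finset.sum_mul, Finset.sum_boole]
    have hBF : BF a C F m = (Finset.univ.filter (fun c : C =>
            ∀ (i : Fin (t + 1)) (ℓ : Fin n),
              Ideal.span {(c : Fin n → R) ℓ} = Ideal.span {a i} → m ℓ ∈ F i)).card := by
      rw [BF, Nat.card_eq_fintype_card, Fintype.card_subtype]
    have hX : (∏ ℓ, X (m ℓ) : MvPolynomial (Fin (t + 1)) ℚ)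
        = ∏ i : Fin (t + 1), X i ^ (Nat.card {ℓ : Fin n // m ℓ = i}) := by
      rw [← prod_fiber_pow m X]
      refine Finset.prod_congr rfl fun i _ => ?_
      rw [Nat.card_eq_fintype_card, Fintype.card_subtype]
    rw [hX, hBF]
    rw [map_natCast (MvPolynomial.C : ℚ →+* MvPolynomial (Fin (t + 1)) ℚ)]
    congr!

end
end

section
/- Let C be a linear code of length n over a finite commutative Frobenius ring R. Let A be the (t+1)×(t+1) 0–1 matrix with A_{ij} = 1 iff a_iR ⊆ a_jR, let D = diag(|a_0R|, |a_1R|, …, |a_tR|), and let Q be the (t+1)×(t+1) matrix with Q_{ij} = 0 if a_i ≠ 0 and a_kR ⊆ a_jR for some k with a_i a_k ≠ 0, and Q_{ij} = 1 otherwise. Then: (1) Q_{ij} = 1 if and only if a_jR ⊆ (a_iR)⊥ = {r ∈ R : a_i r = 0}; (2) Q is symmetric; and (3) swe_{C⊥}(x) = (1/|C|) · swe_C(Q D A^{−1} x), as an identity of polynomials in x_0, …, x_t (with A^{−1} the inverse of A over ℚ). -/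
noncomputable section
set_option linter.unusedSectionVars false
set_option linter.unusedVariables false
set_option linter.unnecessarySimpa false
open scoped BigOperators


section Card
variable {R : Type*} [CommRing R] {M : Type*} [AddCommGroup M] [Module R M] [Finite M]

lemma card_lagrange (p : Submodule R M) (q : Submodule R p) :
    Nat.card p = Nat.card (p ⧸ q) * Nat.card q :=
  AddSubgroup.card_eq_card_quotient_mul_card_addSubgroup q.toAddSubgroup

lemma card_sup_mul_card_inf (p p' : Submodule R M) :
    Nat.card (p ⊔ p' : Submodule R M) * Nat.card (p ⊓ p' : Submodule R M)
      = Nat.card p * Nat.card p' := by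
  have h1 := card_lagrange p (Submodule.comap p.subtype (p ⊓ p'))
  have h2 := card_lagrange (p ⊔ p') (Submodule.comap (p ⊔ p').subtype p')
  have e1 : Nat.card (Submodule.comap p.subtype (p ⊓ p')) = Nat.card (p ⊓ p' : Submodule R M) :=
    Nat.card_congr (Submodule.comapSubtypeEquivOfLe inf_le_left).toEquiv
  have e2 : Nat.card (Submodule.comap (p ⊔ p').subtype p') = Nat.card p' :=
    Nat.card_congr (Submodule.comapSubtypeEquivOfLe le_sup_right).toEquiv
  have e3 : Nat.card (p ⧸ Submodule.comap p.subtype (p ⊓ p'))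
      = Nat.card ((p ⊔ p' : Submodule R M) ⧸ Submodule.comap (p ⊔ p').subtype p') :=
    Nat.card_congr (LinearMap.quotientInfEquivSupQuotient p p').toEquiv
  calc Nat.card (p ⊔ p' : Submodule R M) * Nat.card (p ⊓ p' : Submodule R M)
      = (Nat.card ((p ⊔ p' : Submodule R M) ⧸ Submodule.comap (p ⊔ p').subtype p')
          * Nat.card p') * Nat.card (p ⊓ p' : Submodule R M) := by rw [h2, e2]
    _ = Nat.card p * Nat.card p' := by
        rw [← e3, h1, e1]; ring

end Card


open MvPolynomial Classical

section Dual
variable {R : Type*} [CommRing R] [Fintype R] {n : ℕ}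

lemma mem_dualCode {C : Submodule R (Fin n → R)} {v : Fin n → R} :
    v ∈ dualCode C ↔ ∀ u ∈ C, ∑ ℓ, u ℓ * v ℓ = 0 := Iff.rfl

lemma dualCode_anti {C C' : Submodule R (Fin n → R)} (h : C ≤ C') :
    dualCode C' ≤ dualCode C := fun v hv u hu => hv u (h hu)

lemma dualCode_sup (p q : Submodule R (Fin n → R)) :
    dualCode (p ⊔ q) = dualCode p ⊓ dualCode q := by
  apply le_antisymm
  · exact le_inf (dualCode_anti le_sup_left) (dualCode_anti le_sup_right)
  · rintro v ⟨hv1, hv2⟩ u hu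
    rcases Submodule.mem_sup.1 hu with ⟨x, hx, y, hy, rfl⟩
    have h1 := hv1 x hx
    have h2 := hv2 y hy
    simp only [Pi.add_apply, add_mul, Finset.sum_add_distrib, h1, h2, add_zero]

lemma le_dualCode_dualCode (p : Submodule R (Fin n → R)) :
    p ≤ dualCode (dualCode p) := by
  intro u hu v hv
  have h := hv u hu
  rw [← h]
  exact Finset.sum_congr rfl fun ℓ _ => mul_comm _ _

lemma card_submodule_pos (p : Submodule R (Fin n → R)) : 0 < Nat.card p :=
  Nat.card_pos

lemma eq_of_le_of_card_le {p q : Submodule R (Fin n → R)} (h : p ≤ q)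
    (hc : Nat.card q ≤ Nat.card p) : p = q := by
  apply SetLike.coe_injective
  exact Set.eq_of_subset_of_ncard_le h
    (by rwa [← Nat.card_coe_set_eq, ← Nat.card_coe_set_eq]) (Set.toFinite _)

lemma dualCode_dualCode (hR : IsFrobeniusRing R) (p : Submodule R (Fin n → R)) :
    dualCode (dualCode p) = p := by
  have h1 : Nat.card (dualCode p) * Nat.card p = Fintype.card R ^ n := by
    rw [mul_comm]; exact hR n p
  have h2 := hR n (dualCode p)
  have hd := card_submodule_pos (dualCode p)
  have hcard : Nat.card (dualCode (dualCode p)) = Nat.card p :=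
    Nat.eq_of_mul_eq_mul_left hd (h2.trans h1.symm)
  exact (eq_of_le_of_card_le (le_dualCode_dualCode p) hcard.le).symm

/-- The key counting identity: `|C| * |C⊥ ⊓ J| = |J| * |C ⊓ J⊥|`. -/
lemma key_count (hR : IsFrobeniusRing R) (C J : Submodule R (Fin n → R)) :
    Nat.card C * Nat.card (dualCode C ⊓ J : Submodule R (Fin n → R))
      = Nat.card J * Nat.card (C ⊓ dualCode J : Submodule R (Fin n → R)) := by
  have hsup := hR n (C ⊔ dualCode J)
  rw [dualCode_sup, dualCode_dualCode hR] at hsup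
  have hprod := card_sup_mul_card_inf C (dualCode J)
  have hJ := hR n J
  have hdJ := card_submodule_pos (dualCode J)
  apply Nat.eq_of_mul_eq_mul_left hdJ
  calc Nat.card (dualCode J)
        * (Nat.card C * Nat.card (dualCode C ⊓ J : Submodule R (Fin n → R)))
      = (Nat.card (C ⊔ dualCode J : Submodule R (Fin n → R))
          * Nat.card (C ⊓ dualCode J : Submodule R (Fin n → R)))
          * Nat.card (dualCode C ⊓ J : Submodule R (Fin n → R)) := by rw [hprod]; ring
    _ = (Nat.card (C ⊔ dualCode J : Submodule R (Fin n → R))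
          * Nat.card (dualCode C ⊓ J : Submodule R (Fin n → R)))
          * Nat.card (C ⊓ dualCode J : Submodule R (Fin n → R)) := by ring
    _ = (Nat.card J * Nat.card (dualCode J))
          * Nat.card (C ⊓ dualCode J : Submodule R (Fin n → R)) := by rw [hsup, ← hJ]
    _ = Nat.card (dualCode J)
        * (Nat.card J * Nat.card (C ⊓ dualCode J : Submodule R (Fin n → R))) := by ring

end Dual

section ProdCode
variable {R : Type*} [CommRing R] [Fintype R] {n : ℕ}

/-- The product code `J = b₁R × ⋯ × b_nR`. -/
def prodCode (b : Fin n → R) : Submodule R (Fin n → R) :=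
  Submodule.pi Set.univ (fun ℓ => Ideal.span {b ℓ})

lemma mem_prodCode {b v : Fin n → R} :
    v ∈ prodCode b ↔ ∀ ℓ, v ℓ ∈ Ideal.span {b ℓ} := by
  simp [prodCode, Submodule.mem_pi]

lemma card_prodCode (b : Fin n → R) :
    Nat.card (prodCode b) = ∏ ℓ, Nat.card (Ideal.span {b ℓ}) := by
  rw [← Nat.card_pi]
  exact Nat.card_congr
    ⟨fun v => fun ℓ => ⟨v.1 ℓ, (mem_prodCode.1 v.2) ℓ⟩,
     fun f => ⟨fun ℓ => (f ℓ : R), mem_prodCode.2 fun ℓ => (f ℓ).2⟩,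
     fun v => rfl, fun f => rfl⟩

lemma mem_dual_prodCode {b c : Fin n → R} :
    c ∈ dualCode (prodCode b) ↔ ∀ ℓ, c ℓ * b ℓ = 0 := by
  constructor
  · intro h ℓ
    have hu : Pi.single ℓ (b ℓ) ∈ prodCode b := by
      rw [mem_prodCode]
      intro ℓ'
      rcases eq_or_ne ℓ' ℓ with rfl | hne
      · rw [Pi.single_eq_same]; exact Ideal.mem_span_singleton_self _
      · rw [Pi.single_eq_of_ne hne]; exact Submodule.zero_mem _
    have := h _ hu
    rw [Finset.sum_eq_single ℓ (fun ℓ' _ hne => by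
      rw [Pi.single_eq_of_ne hne, zero_mul]) (fun h' => absurd (Finset.mem_univ ℓ) h')] at this
    rw [Pi.single_eq_same] at this
    rw [mul_comm]; exact this
  · intro h u hu
    apply Finset.sum_eq_zero
    intro ℓ _
    rcases Ideal.mem_span_singleton'.1 (mem_prodCode.1 hu ℓ) with ⟨s, hs⟩
    rw [← hs, mul_assoc, mul_comm (b ℓ), h ℓ, mul_zero]

lemma card_subtype_inf {p q : Submodule R (Fin n → R)} {P : (Fin n → R) → Prop}
    (hP : ∀ x, P x ↔ x ∈ q) :
    Nat.card {x : p // P (x : Fin n → R)} = Nat.card ↥(p ⊓ q) :=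
  Nat.card_congr
    ⟨fun x => ⟨x.1.1, x.1.2, (hP _).1 x.2⟩,
     fun x => ⟨⟨x.1, x.2.1⟩, (hP _).2 x.2.2⟩,
     fun x => rfl, fun x => rfl⟩

/-- The `(★★)` counting identity in subtype form. -/
lemma star_count (hR : IsFrobeniusRing R) (C : Submodule R (Fin n → R)) (b : Fin n → R) :
    Nat.card C * Nat.card {v : dualCode C // ∀ ℓ, (v : Fin n → R) ℓ ∈ Ideal.span {b ℓ}}
      = (∏ ℓ, Nat.card (Ideal.span {b ℓ}))
          * Nat.card {c : C // ∀ ℓ, (c : Fin n → R) ℓ * b ℓ = 0} := by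
  rw [card_subtype_inf (q := prodCode b) (fun x => mem_prodCode.symm),
      card_subtype_inf (q := dualCode (prodCode b)) (fun x => mem_dual_prodCode.symm),
      ← card_prodCode]
  exact key_count hR C (prodCode b)

end ProdCode



section Subst
variable {t : ℕ}

/-- Linear substitution `xᵢ ↦ ∑ⱼ Mᵢⱼ xⱼ` on polynomials. -/
def subst (M : Matrix (Fin (t + 1)) (Fin (t + 1)) ℚ) :
    MvPolynomial (Fin (t + 1)) ℚ →ₐ[ℚ] MvPolynomial (Fin (t + 1)) ℚ :=
  bind₁ (fun i => ∑ j, MvPolynomial.C (M i j) * X j)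

lemma subst_C (M : Matrix (Fin (t + 1)) (Fin (t + 1)) ℚ) (r : ℚ) :
    subst M (MvPolynomial.C r) = MvPolynomial.C r := by
  simpa [Algebra.algebraMap_self_apply, MvPolynomial.algebraMap_eq] using (subst M).commutes r

lemma subst_subst (M M' : Matrix (Fin (t + 1)) (Fin (t + 1)) ℚ)
    (p : MvPolynomial (Fin (t + 1)) ℚ) :
    subst M (subst M' p) = subst (M' * M) p := by
  show (bind₁ _) ((bind₁ _) p) = (bind₁ _) p
  rw [bind₁_bind₁]
  have h : (fun i => (bind₁ fun i => ∑ j, MvPolynomial.C (M i j) * X j)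
        (∑ j, MvPolynomial.C (M' i j) * X j))
      = fun i : Fin (t + 1) => ∑ j, MvPolynomial.C ((M' * M) i j) * X j := by
    funext i
    calc
      (bind₁ fun i => ∑ j, MvPolynomial.C (M i j) * X j) (∑ j, MvPolynomial.C (M' i j) * X j)
          = ∑ j, MvPolynomial.C (M' i j) * ∑ k, MvPolynomial.C (M j k) * X k := by
        simp only [map_sum, map_mul, bind₁_X_right, algHom_C, MvPolynomial.algebraMap_eq]
    _ = ∑ j, ∑ k, MvPolynomial.C (M' i j * M j k) * X k := by
        apply Finset.sum_congr rfl
        intro j _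
        rw [Finset.mul_sum]
        apply Finset.sum_congr rfl
        intro k _
        rw [← mul_assoc, ← MvPolynomial.C_mul]
    _ = ∑ k, MvPolynomial.C ((M' * M) i k) * X k := by
        rw [Finset.sum_comm]
        apply Finset.sum_congr rfl
        intro k _
        rw [Matrix.mul_apply, map_sum (MvPolynomial.C) _ Finset.univ, Finset.sum_mul]
  rw [h]

lemma subst_one (p : MvPolynomial (Fin (t + 1)) ℚ) : subst 1 p = p := by
  show (bind₁ _) p = p
  have h : (fun i : Fin (t + 1) => ∑ j, MvPolynomial.C ((1 : Matrix (Fin (t + 1)) (Fin (t + 1)) ℚ) i j) * X j)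
      = fun i => X i := by
    funext i
    rw [Finset.sum_eq_single i (fun j _ hne => by
        rw [Matrix.one_apply_ne (Ne.symm hne), map_zero, zero_mul])
      (fun h => absurd (Finset.mem_univ i) h)]
    rw [Matrix.one_apply_eq, map_one, one_mul]
  rw [h, bind₁_X_left]
  simp

end Subst


section DetA
variable {R : Type*} [CommRing R] [Fintype R] {t : ℕ}

lemma card_span_mono {p q : Ideal R} (h : p ≤ q) : Nat.card p ≤ Nat.card q := by
  have h2 := Set.ncard_le_ncard (show (p : Set R) ⊆ (q : Set R) from h) (Set.toFinite _)
  rwa [← Nat.card_coe_set_eq, ← Nat.card_coe_set_eq] at h2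

lemma span_eq_of_le_of_card_le {p q : Ideal R} (h : p ≤ q)
    (hc : Nat.card q ≤ Nat.card p) : p = q := by
  apply SetLike.coe_injective
  exact Set.eq_of_subset_of_ncard_le h
    (by rwa [← Nat.card_coe_set_eq, ← Nat.card_coe_set_eq]) (Set.toFinite _)

lemma detA_eq_one (a : Fin (t + 1) → R)
    (hinj : ∀ i j, Ideal.span {a i} = Ideal.span {a j} → i = j)
    (A : Matrix (Fin (t + 1)) (Fin (t + 1)) ℚ)
    (hA : ∀ i j, A i j = if Ideal.span {a i} ≤ Ideal.span {a j} then 1 else 0) :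
    A.det = 1 := by
  classical
  let f : Fin (t + 1) → ℕ := fun i => Nat.card (Ideal.span {a i})
  let σ := Tuple.sort f
  have hmono : ∀ {i j : Fin (t + 1)}, i ≤ j →
      Nat.card (Ideal.span {a (σ i)}) ≤ Nat.card (Ideal.span {a (σ j)}) := by
    intro i j hij
    exact Tuple.monotone_sort f hij
  have hdet : (A.submatrix σ σ).det = A.det := Matrix.det_submatrix_equiv_self σ A
  have htri : (A.submatrix σ σ).BlockTriangular id := by
    intro i j hij
    simp only [id_eq] at hij
    simp only [Matrix.submatrix_apply, hA]
    rw [if_neg]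
    intro hle
    have h1 : Nat.card (Ideal.span {a (σ i)}) ≤ Nat.card (Ideal.span {a (σ j)}) :=
      card_span_mono hle
    have h2 := hmono hij.le
    have : Ideal.span {a (σ i)} = Ideal.span {a (σ j)} :=
      span_eq_of_le_of_card_le hle h2
    exact absurd (σ.injective (hinj _ _ this)) hij.ne'
  rw [← hdet, Matrix.det_of_upperTriangular htri]
  apply Finset.prod_eq_one
  intro i _
  simp [hA]

lemma isUnit_detA (a : Fin (t + 1) → R)
    (hinj : ∀ i j, Ideal.span {a i} = Ideal.span {a j} → i = j)
    (A : Matrix (Fin (t + 1)) (Fin (t + 1)) ℚ)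
    (hA : ∀ i j, A i j = if Ideal.span {a i} ≤ Ideal.span {a j} then 1 else 0) :
    IsUnit A.det := by
  rw [detA_eq_one a hinj A hA]; exact isUnit_one

end DetA


section QLem
variable {R : Type*} [CommRing R] {t : ℕ}

lemma mul_zero_congr {r r' : R} (h : Ideal.span {r} = Ideal.span {r'}) (x : R) :
    r * x = 0 ↔ r' * x = 0 := by
  obtain ⟨s, hs⟩ := Ideal.mem_span_singleton'.1
    (h ▸ Ideal.mem_span_singleton_self r : r ∈ Ideal.span {r'})
  obtain ⟨s', hs'⟩ := Ideal.mem_span_singleton'.1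
    (h.symm ▸ Ideal.mem_span_singleton_self r' : r' ∈ Ideal.span {r})
  constructor
  · intro h0; rw [← hs', mul_assoc, h0, mul_zero]
  · intro h0; rw [← hs, mul_assoc, h0, mul_zero]

variable (a : Fin (t + 1) → R) (Q : Matrix (Fin (t + 1)) (Fin (t + 1)) ℚ)
variable (hQ : ∀ i j, Q i j =
      if a i ≠ 0 ∧ ∃ k, a i * a k ≠ 0 ∧ Ideal.span {a k} ≤ Ideal.span {a j}
      then 0 else 1)

include hQ

lemma q_val (i j : Fin (t + 1)) : Q i j = if a i * a j = 0 then 1 else 0 := by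
  rw [hQ i j]
  by_cases h : a i * a j = 0
  · rw [if_pos h, if_neg]
    rintro ⟨hi, k, hk, hkj⟩
    obtain ⟨s, hs⟩ := Ideal.mem_span_singleton'.1 (hkj (Ideal.mem_span_singleton_self (a k)))
    exact hk (by rw [← hs, mul_comm s, ← mul_assoc, h, zero_mul])
  · rw [if_neg h, if_pos]
    exact ⟨fun h0 => h (by rw [h0, zero_mul]), j, h, le_rfl⟩

lemma q_one_iff (i j : Fin (t + 1)) :
    Q i j = 1 ↔ ∀ r ∈ Ideal.span {a j}, a i * r = 0 := by
  rw [q_val a Q hQ]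
  by_cases h : a i * a j = 0
  · rw [if_pos h]
    simp only [true_iff]
    intro r hr
    obtain ⟨s, hs⟩ := Ideal.mem_span_singleton'.1 hr
    rw [← hs, mul_comm s, ← mul_assoc, h, zero_mul]
  · rw [if_neg h]
    constructor
    · intro h0; exact absurd h0 (by norm_num)
    · intro h0
      exact absurd (h0 (a j) (Ideal.mem_span_singleton_self (a j))) h

lemma q_symm (i j : Fin (t + 1)) : Q i j = Q j i := by
  rw [q_val a Q hQ, q_val a Q hQ, mul_comm (a j)]

end QLem


section Main
variable {R : Type*} [CommRing R] [Fintype R] {t : ℕ}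
variable (a : Fin (t + 1) → R)
variable (hrep : ∀ r : R, ∃ i, Ideal.span {r} = Ideal.span {a i})
variable (hinj : ∀ i j, Ideal.span {a i} = Ideal.span {a j} → i = j)

/-- Index of the principal ideal generated by `r`. -/
def idx (hrep : ∀ r : R, ∃ i, Ideal.span {r} = Ideal.span {a i}) (r : R) : Fin (t + 1) :=
  (hrep r).choose

lemma span_idx (r : R) : Ideal.span {r} = Ideal.span {a (idx a hrep r)} :=
  (hrep r).choose_spec

include hinj in
lemma idx_eq_iff {r : R} {i : Fin (t + 1)} :
    idx a hrep r = i ↔ Ideal.span {r} = Ideal.span {a i} := by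
  constructor
  · rintro rfl; exact span_idx a hrep r
  · intro h; exact hinj _ _ ((span_idx a hrep r).symm.trans h)

variable {n : ℕ}

include hinj in
lemma swc_eq_filter (v : Fin n → R) (i : Fin (t + 1)) :
    swc a v i = (Finset.univ.filter fun ℓ => idx a hrep (v ℓ) = i).card := by
  rw [swc, Nat.card_eq_fintype_card, Fintype.card_subtype]
  congr 1
  apply Finset.filter_congr
  intro ℓ _
  exact (idx_eq_iff a hrep hinj).symm

include hinj in
lemma prod_pow_swc (g : Fin (t + 1) → MvPolynomial (Fin (t + 1)) ℚ) (v : Fin n → R) :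
    ∏ i, g i ^ swc a v i = ∏ ℓ, g (idx a hrep (v ℓ)) := by
  rw [← Finset.prod_fiberwise Finset.univ (fun ℓ => idx a hrep (v ℓ))
    (fun ℓ => g (idx a hrep (v ℓ)))]
  apply Finset.prod_congr rfl
  intro i _
  symm
  calc ∏ ℓ ∈ Finset.univ.filter fun ℓ => idx a hrep (v ℓ) = i, g (idx a hrep (v ℓ))
      = ∏ ℓ ∈ Finset.univ.filter fun ℓ => idx a hrep (v ℓ) = i, g i :=
        Finset.prod_congr rfl (fun ℓ hℓ => by rw [(Finset.mem_filter.1 hℓ).2])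
    _ = g i ^ swc a v i := by rw [Finset.prod_const, swc_eq_filter a hrep hinj]

lemma swe_apply (E : Submodule R (Fin n → R)) [inst : Fintype E] :
    swe a E = ∑ c : E, ∏ i, X i ^ swc a (c : Fin n → R) i := by
  rw [Subsingleton.elim inst (Fintype.ofFinite E)]
  rfl

include hinj in
lemma subst_swe (M : Matrix (Fin (t + 1)) (Fin (t + 1)) ℚ) (E : Submodule R (Fin n → R))
    [Fintype E] :
    subst M (swe a E)
      = ∑ v : E, ∏ ℓ, (∑ j, MvPolynomial.C (M (idx a hrep ((v : Fin n → R) ℓ)) j) * X j) := by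
  rw [swe_apply a E, map_sum]
  apply Finset.sum_congr rfl
  intro v _
  rw [map_prod]
  have h : ∀ i : Fin (t + 1), subst M (X i ^ swc a (v : Fin n → R) i)
      = (∑ j, MvPolynomial.C (M i j) * X j) ^ swc a (v : Fin n → R) i := by
    intro i
    rw [map_pow]
    congr 1
    exact bind₁_X_right _ i
  rw [Finset.prod_congr rfl (fun i _ => h i)]
  exact prod_pow_swc a hrep hinj _ _

lemma prod_ite_zero' (P : Fin n → Prop) (m : Fin n → MvPolynomial (Fin (t + 1)) ℚ) :
    (∏ ℓ, if P ℓ then m ℓ else 0) = if ∀ ℓ, P ℓ then ∏ ℓ, m ℓ else 0 := by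
  by_cases h : ∀ ℓ, P ℓ
  · rw [if_pos h]; exact Finset.prod_congr rfl fun ℓ _ => if_pos (h ℓ)
  · rw [if_neg h]
    push_neg at h
    obtain ⟨ℓ0, h0⟩ := h
    exact Finset.prod_eq_zero (Finset.mem_univ ℓ0) (if_neg h0)

lemma sum_ite_card {α : Type*} [Fintype α] (P : α → Prop) (m : MvPolynomial (Fin (t + 1)) ℚ) :
    (∑ x : α, if P x then m else 0)
      = MvPolynomial.C ((Nat.card {x : α // P x} : ℚ)) * m := by
  have h1 : (Finset.univ.filter P).card = Nat.card {x : α // P x} := by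
    rw [Nat.card_eq_fintype_card, Fintype.card_subtype]
  rw [Finset.sum_ite, Finset.sum_const, Finset.sum_const_zero, add_zero, h1, nsmul_eq_mul,
    ← map_natCast (MvPolynomial.C : ℚ →+* MvPolynomial (Fin (t + 1)) ℚ)]

include hrep hinj in
lemma key_identity (hR : IsFrobeniusRing R) (C : Submodule R (Fin n → R))
    (A D Q : Matrix (Fin (t + 1)) (Fin (t + 1)) ℚ)
    (hA : ∀ i j, A i j = if Ideal.span {a i} ≤ Ideal.span {a j} then 1 else 0)
    (hD : D = Matrix.diagonal fun i => (Nat.card (Ideal.span {a i}) : ℚ))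
    (hQ : ∀ i j, Q i j =
      if a i ≠ 0 ∧ ∃ k, a i * a k ≠ 0 ∧ Ideal.span {a k} ≤ Ideal.span {a j}
      then 0 else 1) :
    MvPolynomial.C ((Nat.card C : ℚ)) * subst A (swe a (dualCode C)) = subst (Q * D) (swe a C) := by
  letI : Fintype (dualCode C) := Fintype.ofFinite _
  letI : Fintype C := Fintype.ofFinite _
  rw [subst_swe a hrep hinj A (dualCode C), subst_swe a hrep hinj (Q * D) C]
  have hAe : ∀ (r : R) (j : Fin (t + 1)),
      (MvPolynomial.C (A (idx a hrep r) j) * X j : MvPolynomial (Fin (t + 1)) ℚ)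
        = if r ∈ Ideal.span {a j} then X j else 0 := by
    intro r j
    rw [hA]
    have hiff : (Ideal.span {a (idx a hrep r)} ≤ Ideal.span {a j}) ↔ r ∈ Ideal.span {a j} := by
      rw [← span_idx a hrep r, Ideal.span_singleton_le_iff_mem]
    by_cases h : r ∈ Ideal.span {a j}
    · rw [if_pos (hiff.2 h), if_pos h, map_one, one_mul]
    · rw [if_neg (fun hh => h (hiff.1 hh)), if_neg h, map_zero, zero_mul]
  have hQe : ∀ (r : R) (j : Fin (t + 1)),
      (MvPolynomial.C ((Q * D) (idx a hrep r) j) * X j : MvPolynomial (Fin (t + 1)) ℚ)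
        = if r * a j = 0
          then MvPolynomial.C ((Nat.card (Ideal.span {a j}) : ℚ)) * X j else 0 := by
    intro r j
    rw [hD, Matrix.mul_diagonal, q_val a Q hQ]
    have hiff : (a (idx a hrep r) * a j = 0) ↔ r * a j = 0 :=
      (mul_zero_congr (span_idx a hrep r) (a j)).symm
    by_cases h : r * a j = 0
    · rw [if_pos (hiff.2 h), if_pos h, one_mul]
    · rw [if_neg (fun hh => h (hiff.1 hh)), if_neg h, zero_mul, map_zero, zero_mul]
  simp only [hAe, hQe]
  have expandL : ∀ v : dualCode C,
      (∏ ℓ, ∑ j, if (v : Fin n → R) ℓ ∈ Ideal.span {a j} then (X j : MvPolynomial (Fin (t + 1)) ℚ) else 0)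
        = ∑ w : Fin n → Fin (t + 1),
            if (∀ ℓ, (v : Fin n → R) ℓ ∈ Ideal.span {a (w ℓ)}) then ∏ ℓ, X (w ℓ) else 0 := by
    intro v
    rw [Finset.prod_univ_sum, Fintype.piFinset_univ]
    exact Finset.sum_congr rfl fun w _ => prod_ite_zero' _ _
  have expandR : ∀ c : C,
      (∏ ℓ, ∑ j, if (c : Fin n → R) ℓ * a j = 0
          then MvPolynomial.C ((Nat.card (Ideal.span {a j}) : ℚ)) * X j else 0)
        = ∑ w : Fin n → Fin (t + 1),
            if (∀ ℓ, (c : Fin n → R) ℓ * a (w ℓ) = 0)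
            then ∏ ℓ, MvPolynomial.C ((Nat.card (Ideal.span {a (w ℓ)}) : ℚ)) * X (w ℓ) else 0 := by
    intro c
    rw [Finset.prod_univ_sum, Fintype.piFinset_univ]
    exact Finset.sum_congr rfl fun w _ => prod_ite_zero' _ _
  rw [Finset.sum_congr rfl (fun v _ => expandL v), Finset.sum_congr rfl (fun c _ => expandR c),
    Finset.sum_comm, Finset.sum_comm (s := (Finset.univ : Finset C)), Finset.mul_sum]
  apply Finset.sum_congr rfl
  intro w _
  rw [Finset.sum_ite, Finset.sum_const, Finset.sum_const_zero, add_zero]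
  rw [Finset.sum_ite, Finset.sum_const, Finset.sum_const_zero, add_zero]
  rw [Finset.prod_mul_distrib,
    ← map_prod (MvPolynomial.C : ℚ →+* MvPolynomial (Fin (t + 1)) ℚ) _ Finset.univ]
  have e1 : (Finset.univ.filter
        (fun x : (dualCode C) => ∀ ℓ, (x : Fin n → R) ℓ ∈ Ideal.span {a (w ℓ)})).card
      = Nat.card {v : dualCode C // ∀ ℓ, (v : Fin n → R) ℓ ∈ Ideal.span {a (w ℓ)}} := by
    rw [Nat.card_eq_fintype_card, Fintype.card_subtype]
  have e2 : (Finset.univ.filter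
        (fun x : C => ∀ ℓ, (x : Fin n → R) ℓ * a (w ℓ) = 0)).card
      = Nat.card {c : C // ∀ ℓ, (c : Fin n → R) ℓ * a (w ℓ) = 0} := by
    rw [Nat.card_eq_fintype_card, Fintype.card_subtype]
  rw [e1, e2, nsmul_eq_mul, nsmul_eq_mul,
    ← map_natCast (MvPolynomial.C : ℚ →+* MvPolynomial (Fin (t + 1)) ℚ),
    ← map_natCast (MvPolynomial.C : ℚ →+* MvPolynomial (Fin (t + 1)) ℚ)]
  have h := star_count hR C (fun ℓ => a (w ℓ))
  have h' : (Nat.card C : ℚ)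
        * (Nat.card {v : dualCode C // ∀ ℓ, (v : Fin n → R) ℓ ∈ Ideal.span {a (w ℓ)}} : ℚ)
      = (Nat.card {c : C // ∀ ℓ, (c : Fin n → R) ℓ * a (w ℓ) = 0} : ℚ)
        * ∏ ℓ, (Nat.card (Ideal.span {a (w ℓ)}) : ℚ) := by
    exact_mod_cast h.trans (Nat.mul_comm _ _)
  rw [← mul_assoc, ← mul_assoc, ← map_mul, ← map_mul, h']

end Main


/-- the main MacWilliams identity
`swe_{C⊥}(x) = (1/|C|) · swe_C(Q D A⁻¹ x)`, where `A` is the adjacency matrix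
of the poset of principal ideals, `D = diag(|a₀R|, …, |a_tR|)` and `Q` is as
in the theorem; moreover `Q_{ij} = 1 ↔ a_j R ⊆ (a_i R)⊥` and `Q` is symmetric. -/
theorem stmt8 {R : Type*} [CommRing R] [Fintype R] (hR : IsFrobeniusRing R)
    {t : ℕ} (a : Fin (t + 1) → R)
    (hrep : ∀ r : R, ∃ i, Ideal.span {r} = Ideal.span {a i})
    (hinj : ∀ i j, Ideal.span {a i} = Ideal.span {a j} → i = j)
    {n : ℕ} (C : Submodule R (Fin n → R))
    (A D Q : Matrix (Fin (t + 1)) (Fin (t + 1)) ℚ)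
    (hA : ∀ i j, A i j = if Ideal.span {a i} ≤ Ideal.span {a j} then 1 else 0)
    (hD : D = Matrix.diagonal fun i => (Nat.card (Ideal.span {a i}) : ℚ))
    (hQ : ∀ i j, Q i j =
      if a i ≠ 0 ∧ ∃ k, a i * a k ≠ 0 ∧ Ideal.span {a k} ≤ Ideal.span {a j}
      then 0 else 1) :
    (∀ i j, Q i j = 1 ↔ ∀ r ∈ Ideal.span {a j}, a i * r = 0) ∧
    (∀ i j, Q i j = Q j i) ∧
    swe a (dualCode C) =
      MvPolynomial.C ((Nat.card C : ℚ)⁻¹) *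
        (MvPolynomial.bind₁ (fun i : Fin (t + 1) =>
          ∑ j : Fin (t + 1), MvPolynomial.C ((Q * D * A⁻¹) i j) * X j)) (swe a C) := by
  refine ⟨fun i j => q_one_iff a Q hQ i j, fun i j => q_symm a Q hQ i j, ?_⟩
  have hdet := isUnit_detA a hinj A hA
  have hAA : A * A⁻¹ = 1 := Matrix.mul_nonsing_inv A hdet
  have hC0 : ((Nat.card C : ℚ)) ≠ 0 := Nat.cast_ne_zero.2 (card_submodule_pos C).ne'
  have hkey := key_identity a hrep hinj hR C A D Q hA hD hQ
  show swe a (dualCode C)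
      = MvPolynomial.C ((Nat.card C : ℚ)⁻¹) * subst (Q * D * A⁻¹) (swe a C)
  calc swe a (dualCode C)
      = subst 1 (swe a (dualCode C)) := (subst_one _).symm
    _ = subst (A * A⁻¹) (swe a (dualCode C)) := by rw [hAA]
    _ = subst A⁻¹ (subst A (swe a (dualCode C))) := (subst_subst _ _ _).symm
    _ = subst A⁻¹ (MvPolynomial.C ((Nat.card C : ℚ)⁻¹)
          * (MvPolynomial.C ((Nat.card C : ℚ)) * subst A (swe a (dualCode C)))) := by
        rw [← mul_assoc, ← map_mul, inv_mul_cancel₀ hC0, map_one, one_mul]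
    _ = subst A⁻¹ (MvPolynomial.C ((Nat.card C : ℚ)⁻¹) * subst (Q * D) (swe a C)) := by
        rw [hkey]
    _ = MvPolynomial.C ((Nat.card C : ℚ)⁻¹) * subst A⁻¹ (subst (Q * D) (swe a C)) := by
        rw [map_mul, subst_C]
    _ = MvPolynomial.C ((Nat.card C : ℚ)⁻¹) * subst (Q * D * A⁻¹) (swe a C) := by
        rw [subst_subst]


end
end
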